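/- Let A be the linear span in M₃(ℂ) of the matrix units E₁₂, E₁₃, E₂₂, E₃₃, regarded as a (non-unital) complex algebra under matrix multiplication. Then the complex vector space of all linear maps T : A → A satisfying T(a b) = T(a) b for all a, b ∈ A (the right A-module endomorphisms of A) has dimension 8. (In particular this space is strictly larger than the 5-dimensional left idealizer of A in M₃(ℂ).) -/

import Mathlib

open Matrix
noncomputable def E3 (i j : Fin 3) : Matrix (Fin 3) (Fin 3) ℂ := Matrix.single i j 1
noncomputable def Aex : Submodule ℂ (Matrix (Fin 3) (Fin 3) ℂ) :=
  Submodule.span ℂ {E3 0 1, E3 0 2, E3 1 1, E3 2 2}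

noncomputable def recon (c : Fin 4 → ℂ) : Matrix (Fin 3) (Fin 3) ℂ :=
  c 0 • E3 0 1 + c 1 • E3 0 2 + c 2 • E3 1 1 + c 3 • E3 2 2

lemma recon_mem (c : Fin 4 → ℂ) : recon c ∈ Aex := by
  unfold recon Aex
  apply Submodule.add_mem
  apply Submodule.add_mem
  apply Submodule.add_mem
  all_goals exact Submodule.smul_mem _ _ (Submodule.subset_span (by simp))

lemma recon_apply (c : Fin 4 → ℂ) (i j : Fin 3) :
    recon c i j = !![0, c 0, c 1; 0, c 2, 0; 0, 0, c 3] i j := by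
  fin_cases i <;> fin_cases j <;>
    simp [recon, E3, Matrix.single, Matrix.add_apply, Matrix.smul_apply, Matrix.vecHead, Matrix.vecTail]

lemma mem_aex (x : Matrix (Fin 3) (Fin 3) ℂ) (hx : x ∈ Aex) :
    x 0 0 = 0 ∧ x 1 0 = 0 ∧ x 2 0 = 0 ∧ x 1 2 = 0 ∧ x 2 1 = 0 := by
  induction hx using Submodule.span_induction with
  | mem y hy =>
    rcases hy with h | h | h | h <;> subst h <;>
      refine ⟨?_, ?_, ?_, ?_, ?_⟩ <;> simp [E3, Matrix.single]
  | zero => simp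
  | add y z _ _ hy hz =>
    simp [Matrix.add_apply, hy.1, hy.2.1, hy.2.2.1, hy.2.2.2.1, hy.2.2.2.2,
      hz.1, hz.2.1, hz.2.2.1, hz.2.2.2.1, hz.2.2.2.2]
  | smul c y _ hy =>
    simp [Matrix.smul_apply, hy.1, hy.2.1, hy.2.2.1, hy.2.2.2.1, hy.2.2.2.2]

lemma recon_decomp (x : Matrix (Fin 3) (Fin 3) ℂ) (hx : x ∈ Aex) :
    recon ![x 0 1, x 0 2, x 1 1, x 2 2] = x := by
  obtain ⟨h1, h2, h3, h4, h5⟩ := mem_aex x hx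
  ext i j
  fin_cases i <;> fin_cases j <;> simp [recon_apply, h1, h2, h3, h4, h5, Matrix.vecHead, Matrix.vecTail]

noncomputable def eAex : ↥Aex ≃ₗ[ℂ] (Fin 4 → ℂ) where
  toFun x := ![(x : Matrix (Fin 3) (Fin 3) ℂ) 0 1, (x : Matrix (Fin 3) (Fin 3) ℂ) 0 2,
    (x : Matrix (Fin 3) (Fin 3) ℂ) 1 1, (x : Matrix (Fin 3) (Fin 3) ℂ) 2 2]
  map_add' x y := by
    funext i; fin_cases i <;> rfl
  map_smul' c x := by
    funext i; fin_cases i <;> rfl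
  invFun c := ⟨recon c, recon_mem c⟩
  left_inv x := by
    ext1
    exact recon_decomp _ x.2
  right_inv c := by
    funext i
    fin_cases i <;> simp [recon_apply, Matrix.vecHead, Matrix.vecTail]

noncomputable def Bx : Module.Basis (Fin 4) ℂ ↥Aex := Module.Basis.ofEquivFun eAex

lemma coe_Bx (j : Fin 4) : ((Bx j : ↥Aex) : Matrix (Fin 3) (Fin 3) ℂ) =
    ![E3 0 1, E3 0 2, E3 1 1, E3 2 2] j := by
  have : Bx j = eAex.symm (Pi.single j 1) := by
    simp [Bx, Module.Basis.ofEquivFun]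
  rw [this]
  show recon (Pi.single j 1) = _
  fin_cases j <;> · ext i k; fin_cases i <;> fin_cases k <;>
    simp [recon_apply, E3, Matrix.single, Matrix.vecHead, Matrix.vecTail]

noncomputable def piMap : Matrix (Fin 4) (Fin 4) ℂ →ₗ[ℂ] (Fin 8 → ℂ) where
  toFun M := ![M 1 0, M 3 0, M 0 1, M 2 1, M 1 2, M 3 2, M 0 3, M 2 3]
  map_add' M N := by
    funext i; fin_cases i <;> rfl
  map_smul' c M := by
    funext i; fin_cases i <;> rfl

lemma piMap_surj : Function.Surjective piMap := by
  intro c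
  refine ⟨Matrix.of ![![0, c 2, 0, c 6], ![c 0, 0, c 4, 0], ![0, c 3, 0, c 7], ![c 1, 0, c 5, 0]], ?_⟩
  funext i
  fin_cases i <;> rfl

lemma finrank_ker_piMap : Module.finrank ℂ ↥(LinearMap.ker piMap) = 8 := by
  have h := LinearMap.finrank_range_add_finrank_ker piMap
  rw [LinearMap.range_eq_top.mpr piMap_surj] at h
  simp [Module.finrank_matrix] at h
  omega

-- products with E3 column selectors
lemma mul_E01 (x : Matrix (Fin 3) (Fin 3) ℂ) (h1 : x 0 0 = 0) (h2 : x 1 0 = 0)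
    (h3 : x 2 0 = 0) : x * E3 0 1 = 0 := by
  ext i j
  fin_cases i <;> fin_cases j <;>
    simp [E3, Matrix.single, Matrix.mul_apply, Fin.sum_univ_three, h1, h2, h3]

lemma mul_E02 (x : Matrix (Fin 3) (Fin 3) ℂ) (h1 : x 0 0 = 0) (h2 : x 1 0 = 0)
    (h3 : x 2 0 = 0) : x * E3 0 2 = 0 := by
  ext i j
  fin_cases i <;> fin_cases j <;>
    simp [E3, Matrix.single, Matrix.mul_apply, Fin.sum_univ_three, h1, h2, h3]

lemma mul_E11_zero (x : Matrix (Fin 3) (Fin 3) ℂ) (h1 : x 0 1 = 0) (h2 : x 1 1 = 0)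
    (h3 : x 2 1 = 0) : x * E3 1 1 = 0 := by
  ext i j
  fin_cases i <;> fin_cases j <;>
    simp [E3, Matrix.single, Matrix.mul_apply, Fin.sum_univ_three, h1, h2, h3]

lemma mul_E22_zero (x : Matrix (Fin 3) (Fin 3) ℂ) (h1 : x 0 2 = 0) (h2 : x 1 2 = 0)
    (h3 : x 2 2 = 0) : x * E3 2 2 = 0 := by
  ext i j
  fin_cases i <;> fin_cases j <;>
    simp [E3, Matrix.single, Matrix.mul_apply, Fin.sum_univ_three, h1, h2, h3]

lemma mul_E11_self (x : Matrix (Fin 3) (Fin 3) ℂ) (h1 : x 0 0 = 0) (h2 : x 1 0 = 0)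
    (h3 : x 2 0 = 0) (h4 : x 0 2 = 0) (h5 : x 1 2 = 0) (h6 : x 2 2 = 0) :
    x * E3 1 1 = x := by
  ext i j
  fin_cases i <;> fin_cases j <;>
    simp [E3, Matrix.single, Matrix.mul_apply, Fin.sum_univ_three, h1, h2, h3, h4, h5, h6]

lemma mul_E22_self (x : Matrix (Fin 3) (Fin 3) ℂ) (h1 : x 0 0 = 0) (h2 : x 1 0 = 0)
    (h3 : x 2 0 = 0) (h4 : x 0 1 = 0) (h5 : x 1 1 = 0) (h6 : x 2 1 = 0) :
    x * E3 2 2 = x := by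
  ext i j
  fin_cases i <;> fin_cases j <;>
    simp [E3, Matrix.single, Matrix.mul_apply, Fin.sum_univ_three, h1, h2, h3, h4, h5, h6]

lemma mul_mem_aex (a b : Matrix (Fin 3) (Fin 3) ℂ) (ha : a ∈ Aex) (hb : b ∈ Aex) :
    a * b ∈ Aex := by
  obtain ⟨a1, a2, a3, a4, a5⟩ := mem_aex a ha
  obtain ⟨b1, b2, b3, b4, b5⟩ := mem_aex b hb
  have key : recon ![(a*b) 0 1, (a*b) 0 2, (a*b) 1 1, (a*b) 2 2] = a * b := by
    ext i j
    fin_cases i <;> fin_cases j <;>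
      simp [recon_apply, Matrix.mul_apply, Fin.sum_univ_three, Matrix.vecHead, Matrix.vecTail,
        a1, a2, a3, a4, a5, b1, b2, b3, b4, b5]
  rw [← key]
  exact recon_mem _

noncomputable def rightModEnd : Submodule ℂ (↥Aex →ₗ[ℂ] ↥Aex) where
  carrier := {T | ∀ (a b : ↥Aex)
    (h : (a : Matrix (Fin 3) (Fin 3) ℂ) * (b : Matrix (Fin 3) (Fin 3) ℂ) ∈ Aex),
    ((T ⟨(a : Matrix (Fin 3) (Fin 3) ℂ) * (b : Matrix (Fin 3) (Fin 3) ℂ), h⟩ : ↥Aex) :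
        Matrix (Fin 3) (Fin 3) ℂ) =
      ((T a : ↥Aex) : Matrix (Fin 3) (Fin 3) ℂ) * (b : Matrix (Fin 3) (Fin 3) ℂ)}
  add_mem' := by
    intro T S hT hS a b h
    simp only [LinearMap.add_apply, Submodule.coe_add, hT a b h, hS a b h, add_mul]
  zero_mem' := by
    intro a b h
    simp
  smul_mem' := by
    intro c T hT a b h
    simp only [LinearMap.smul_apply, Submodule.coe_smul, hT a b h, smul_mul_assoc]

noncomputable def mulA : ↥Aex →ₗ[ℂ] ↥Aex →ₗ[ℂ] ↥Aex :=
  LinearMap.mk₂ ℂ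
    (fun a b => ⟨(a : Matrix (Fin 3) (Fin 3) ℂ) * (b : Matrix (Fin 3) (Fin 3) ℂ),
      mul_mem_aex _ _ a.2 b.2⟩)
    (fun a a' b => by ext1; simp [add_mul])
    (fun c a b => by ext1; simp [smul_mul_assoc])
    (fun a b b' => by ext1; simp [mul_add])
    (fun c a b => by ext1; simp [mul_smul_comm])

lemma coe_mulA (a b : ↥Aex) : ((mulA a b : ↥Aex) : Matrix (Fin 3) (Fin 3) ℂ) =
    (a : Matrix (Fin 3) (Fin 3) ℂ) * (b : Matrix (Fin 3) (Fin 3) ℂ) := rfl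

lemma toMatrix_entry (T : ↥Aex →ₗ[ℂ] ↥Aex) (i j : Fin 4) :
    LinearMap.toMatrix Bx Bx T i j =
      ![((T (Bx j) : ↥Aex) : Matrix (Fin 3) (Fin 3) ℂ) 0 1,
        ((T (Bx j) : ↥Aex) : Matrix (Fin 3) (Fin 3) ℂ) 0 2,
        ((T (Bx j) : ↥Aex) : Matrix (Fin 3) (Fin 3) ℂ) 1 1,
        ((T (Bx j) : ↥Aex) : Matrix (Fin 3) (Fin 3) ℂ) 2 2] i := by
  rw [LinearMap.toMatrix_apply]
  rfl

lemma coe_Bx0 : ((Bx 0 : ↥Aex) : Matrix (Fin 3) (Fin 3) ℂ) = E3 0 1 := by rw [coe_Bx]; rfl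
lemma coe_Bx1 : ((Bx 1 : ↥Aex) : Matrix (Fin 3) (Fin 3) ℂ) = E3 0 2 := by rw [coe_Bx]; rfl
lemma coe_Bx2 : ((Bx 2 : ↥Aex) : Matrix (Fin 3) (Fin 3) ℂ) = E3 1 1 := by rw [coe_Bx]; rfl
lemma coe_Bx3 : ((Bx 3 : ↥Aex) : Matrix (Fin 3) (Fin 3) ℂ) = E3 2 2 := by rw [coe_Bx]; rfl

lemma E01_mul_E11 : E3 0 1 * E3 1 1 = E3 0 1 :=
  mul_E11_self _ (by simp [E3, Matrix.single]) (by simp [E3, Matrix.single])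
    (by simp [E3, Matrix.single]) (by simp [E3, Matrix.single])
    (by simp [E3, Matrix.single]) (by simp [E3, Matrix.single])
lemma E02_mul_E11 : E3 0 2 * E3 1 1 = 0 :=
  mul_E11_zero _ (by simp [E3, Matrix.single]) (by simp [E3, Matrix.single])
    (by simp [E3, Matrix.single])
lemma E11_mul_E11 : E3 1 1 * E3 1 1 = E3 1 1 :=
  mul_E11_self _ (by simp [E3, Matrix.single]) (by simp [E3, Matrix.single])
    (by simp [E3, Matrix.single]) (by simp [E3, Matrix.single])
    (by simp [E3, Matrix.single]) (by simp [E3, Matrix.single])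
lemma E22_mul_E11 : E3 2 2 * E3 1 1 = 0 :=
  mul_E11_zero _ (by simp [E3, Matrix.single]) (by simp [E3, Matrix.single])
    (by simp [E3, Matrix.single])
lemma E01_mul_E22 : E3 0 1 * E3 2 2 = 0 :=
  mul_E22_zero _ (by simp [E3, Matrix.single]) (by simp [E3, Matrix.single])
    (by simp [E3, Matrix.single])
lemma E02_mul_E22 : E3 0 2 * E3 2 2 = E3 0 2 :=
  mul_E22_self _ (by simp [E3, Matrix.single]) (by simp [E3, Matrix.single])
    (by simp [E3, Matrix.single]) (by simp [E3, Matrix.single])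
    (by simp [E3, Matrix.single]) (by simp [E3, Matrix.single])
lemma E11_mul_E22 : E3 1 1 * E3 2 2 = 0 :=
  mul_E22_zero _ (by simp [E3, Matrix.single]) (by simp [E3, Matrix.single])
    (by simp [E3, Matrix.single])
lemma E22_mul_E22 : E3 2 2 * E3 2 2 = E3 2 2 :=
  mul_E22_self _ (by simp [E3, Matrix.single]) (by simp [E3, Matrix.single])
    (by simp [E3, Matrix.single]) (by simp [E3, Matrix.single])
    (by simp [E3, Matrix.single]) (by simp [E3, Matrix.single])

lemma eq_mul_E11_entries (x : Matrix (Fin 3) (Fin 3) ℂ) (hx : x = x * E3 1 1)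
    (h21 : x 2 1 = 0) : x 0 2 = 0 ∧ x 2 2 = 0 := by
  constructor
  · have h := congrFun (congrFun hx 0) 2
    simpa [Matrix.mul_apply, Fin.sum_univ_three, E3, Matrix.single] using h
  · have h := congrFun (congrFun hx 2) 2
    simpa [Matrix.mul_apply, Fin.sum_univ_three, E3, Matrix.single, h21] using h

lemma eq_mul_E22_entries (x : Matrix (Fin 3) (Fin 3) ℂ) (hx : x = x * E3 2 2)
    (h12 : x 1 2 = 0) : x 0 1 = 0 ∧ x 1 1 = 0 := by
  constructor
  · have h := congrFun (congrFun hx 0) 1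
    simpa [Matrix.mul_apply, Fin.sum_univ_three, E3, Matrix.single] using h
  · have h := congrFun (congrFun hx 1) 1
    simpa [Matrix.mul_apply, Fin.sum_univ_three, E3, Matrix.single, h12] using h

lemma key_eq (T : ↥Aex →ₗ[ℂ] ↥Aex) (hT : T ∈ rightModEnd) (a : ↥Aex) (k : Fin 3)
    (hk : (a : Matrix (Fin 3) (Fin 3) ℂ) * E3 k k = (a : Matrix (Fin 3) (Fin 3) ℂ))
    (hKmem : E3 k k ∈ Aex) :
    ((T a : ↥Aex) : Matrix (Fin 3) (Fin 3) ℂ) =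
      ((T a : ↥Aex) : Matrix (Fin 3) (Fin 3) ℂ) * E3 k k := by
  have hmem : (a : Matrix (Fin 3) (Fin 3) ℂ) * ((⟨E3 k k, hKmem⟩ : ↥Aex) :
      Matrix (Fin 3) (Fin 3) ℂ) ∈ Aex := mul_mem_aex _ _ a.2 hKmem
  have h := hT a ⟨E3 k k, hKmem⟩ hmem
  have harg : (⟨(a : Matrix (Fin 3) (Fin 3) ℂ) * ((⟨E3 k k, hKmem⟩ : ↥Aex) :
      Matrix (Fin 3) (Fin 3) ℂ), hmem⟩ : ↥Aex) = a := Subtype.ext hk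
  rw [harg] at h
  exact h

lemma E11_mem : E3 1 1 ∈ Aex := Submodule.subset_span (by simp [Aex])
lemma E22_mem : E3 2 2 ∈ Aex := Submodule.subset_span (by simp [Aex])

lemma entries_of_mem (T : ↥Aex →ₗ[ℂ] ↥Aex) (hT : T ∈ rightModEnd) :
    ((T (Bx 0) : ↥Aex) : Matrix (Fin 3) (Fin 3) ℂ) 0 2 = 0 ∧
    ((T (Bx 0) : ↥Aex) : Matrix (Fin 3) (Fin 3) ℂ) 2 2 = 0 ∧
    ((T (Bx 1) : ↥Aex) : Matrix (Fin 3) (Fin 3) ℂ) 0 1 = 0 ∧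
    ((T (Bx 1) : ↥Aex) : Matrix (Fin 3) (Fin 3) ℂ) 1 1 = 0 ∧
    ((T (Bx 2) : ↥Aex) : Matrix (Fin 3) (Fin 3) ℂ) 0 2 = 0 ∧
    ((T (Bx 2) : ↥Aex) : Matrix (Fin 3) (Fin 3) ℂ) 2 2 = 0 ∧
    ((T (Bx 3) : ↥Aex) : Matrix (Fin 3) (Fin 3) ℂ) 0 1 = 0 ∧
    ((T (Bx 3) : ↥Aex) : Matrix (Fin 3) (Fin 3) ℂ) 1 1 = 0 := by
  have k0 := key_eq T hT (Bx 0) 1 (by rw [coe_Bx0]; exact E01_mul_E11) E11_mem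
  have k1 := key_eq T hT (Bx 1) 2 (by rw [coe_Bx1]; exact E02_mul_E22) E22_mem
  have k2 := key_eq T hT (Bx 2) 1 (by rw [coe_Bx2]; exact E11_mul_E11) E11_mem
  have k3 := key_eq T hT (Bx 3) 2 (by rw [coe_Bx3]; exact E22_mul_E22) E22_mem
  have m0 := mem_aex _ (T (Bx 0)).2
  have m1 := mem_aex _ (T (Bx 1)).2
  have m2 := mem_aex _ (T (Bx 2)).2
  have m3 := mem_aex _ (T (Bx 3)).2
  obtain ⟨e1, e2⟩ := eq_mul_E11_entries _ k0 m0.2.2.2.2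
  obtain ⟨e3, e4⟩ := eq_mul_E22_entries _ k1 m1.2.2.2.1
  obtain ⟨e5, e6⟩ := eq_mul_E11_entries _ k2 m2.2.2.2.2
  obtain ⟨e7, e8⟩ := eq_mul_E22_entries _ k3 m3.2.2.2.1
  exact ⟨e1, e2, e3, e4, e5, e6, e7, e8⟩

lemma mem_of_entries (T : ↥Aex →ₗ[ℂ] ↥Aex)
    (e1 : ((T (Bx 0) : ↥Aex) : Matrix (Fin 3) (Fin 3) ℂ) 0 2 = 0)
    (e2 : ((T (Bx 0) : ↥Aex) : Matrix (Fin 3) (Fin 3) ℂ) 2 2 = 0)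
    (e3 : ((T (Bx 1) : ↥Aex) : Matrix (Fin 3) (Fin 3) ℂ) 0 1 = 0)
    (e4 : ((T (Bx 1) : ↥Aex) : Matrix (Fin 3) (Fin 3) ℂ) 1 1 = 0)
    (e5 : ((T (Bx 2) : ↥Aex) : Matrix (Fin 3) (Fin 3) ℂ) 0 2 = 0)
    (e6 : ((T (Bx 2) : ↥Aex) : Matrix (Fin 3) (Fin 3) ℂ) 2 2 = 0)
    (e7 : ((T (Bx 3) : ↥Aex) : Matrix (Fin 3) (Fin 3) ℂ) 0 1 = 0)
    (e8 : ((T (Bx 3) : ↥Aex) : Matrix (Fin 3) (Fin 3) ℂ) 1 1 = 0) :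
    T ∈ rightModEnd := by
  have key : ∀ a b : ↥Aex, ((T (mulA a b) : ↥Aex) : Matrix (Fin 3) (Fin 3) ℂ) =
      ((T a : ↥Aex) : Matrix (Fin 3) (Fin 3) ℂ) * (b : Matrix (Fin 3) (Fin 3) ℂ) := by
    let F : ↥Aex →ₗ[ℂ] ↥Aex →ₗ[ℂ] Matrix (Fin 3) (Fin 3) ℂ :=
      LinearMap.mk₂ ℂ
        (fun a b => ((T (mulA a b) : ↥Aex) : Matrix (Fin 3) (Fin 3) ℂ) -
          ((T a : ↥Aex) : Matrix (Fin 3) (Fin 3) ℂ) * (b : Matrix (Fin 3) (Fin 3) ℂ))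
        (fun a a' b => by
          simp only [map_add, LinearMap.add_apply, Submodule.coe_add, add_mul]
          abel)
        (fun c a b => by
          simp only [_root_.map_smul, LinearMap.smul_apply, Submodule.coe_smul, smul_mul_assoc,
            smul_sub])
        (fun a b b' => by
          simp only [map_add, LinearMap.add_apply, Submodule.coe_add, mul_add]
          abel)
        (fun c a b => by
          simp only [_root_.map_smul, LinearMap.smul_apply, Submodule.coe_smul, mul_smul_comm,
            smul_sub])
    have m0 := mem_aex _ (T (Bx 0)).2
    have m1 := mem_aex _ (T (Bx 1)).2
    have m2 := mem_aex _ (T (Bx 2)).2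
    have m3 := mem_aex _ (T (Bx 3)).2
    have hF : F = 0 := by
      apply Bx.ext
      intro i
      apply Bx.ext
      intro j
      have hmemTi := mem_aex _ (T (Bx i)).2
      have hmemi := mem_aex _ (Bx i).2
      show ((T (mulA (Bx i) (Bx j)) : ↥Aex) : Matrix (Fin 3) (Fin 3) ℂ) -
          ((T (Bx i) : ↥Aex) : Matrix (Fin 3) (Fin 3) ℂ) * ((Bx j : ↥Aex) :
            Matrix (Fin 3) (Fin 3) ℂ) = 0
      rw [sub_eq_zero]
      fin_cases j <;> simp only [Fin.zero_eta, Fin.mk_one, Fin.reduceFinMk, Fin.isValue]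
      · -- b = E3 0 1
        have hz : mulA (Bx i) (Bx 0) = 0 := Subtype.ext (by
          rw [coe_mulA, coe_Bx0, mul_E01 _ hmemi.1 hmemi.2.1 hmemi.2.2.1]; rfl)
        rw [hz, map_zero, coe_Bx0, mul_E01 _ hmemTi.1 hmemTi.2.1 hmemTi.2.2.1]
        rfl
      · -- b = E3 0 2
        have hz : mulA (Bx i) (Bx 1) = 0 := Subtype.ext (by
          rw [coe_mulA, coe_Bx1, mul_E02 _ hmemi.1 hmemi.2.1 hmemi.2.2.1]; rfl)
        rw [hz, map_zero, coe_Bx1, mul_E02 _ hmemTi.1 hmemTi.2.1 hmemTi.2.2.1]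
        rfl
      · -- b = E3 1 1
        rw [coe_Bx2]
        fin_cases i <;> simp only [Fin.zero_eta, Fin.mk_one, Fin.reduceFinMk, Fin.isValue]
        · have hv : mulA (Bx 0) (Bx 2) = Bx 0 := Subtype.ext (by
            rw [coe_mulA, coe_Bx0, coe_Bx2, E01_mul_E11])
          rw [hv, mul_E11_self _ m0.1 m0.2.1 m0.2.2.1 e1 m0.2.2.2.1 e2]
        · have hz : mulA (Bx 1) (Bx 2) = 0 := Subtype.ext (by
            rw [coe_mulA, coe_Bx1, coe_Bx2, E02_mul_E11]; rfl)
          rw [hz, map_zero, mul_E11_zero _ e3 e4 m1.2.2.2.2]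
          rfl
        · have hv : mulA (Bx 2) (Bx 2) = Bx 2 := Subtype.ext (by
            rw [coe_mulA, coe_Bx2, E11_mul_E11])
          rw [hv, mul_E11_self _ m2.1 m2.2.1 m2.2.2.1 e5 m2.2.2.2.1 e6]
        · have hz : mulA (Bx 3) (Bx 2) = 0 := Subtype.ext (by
            rw [coe_mulA, coe_Bx3, coe_Bx2, E22_mul_E11]; rfl)
          rw [hz, map_zero, mul_E11_zero _ e7 e8 m3.2.2.2.2]
          rfl
      · -- b = E3 2 2
        rw [coe_Bx3]
        fin_cases i <;> simp only [Fin.zero_eta, Fin.mk_one, Fin.reduceFinMk, Fin.isValue]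
        · have hz : mulA (Bx 0) (Bx 3) = 0 := Subtype.ext (by
            rw [coe_mulA, coe_Bx0, coe_Bx3, E01_mul_E22]; rfl)
          rw [hz, map_zero, mul_E22_zero _ e1 m0.2.2.2.1 e2]
          rfl
        · have hv : mulA (Bx 1) (Bx 3) = Bx 1 := Subtype.ext (by
            rw [coe_mulA, coe_Bx1, coe_Bx3, E02_mul_E22])
          rw [hv, mul_E22_self _ m1.1 m1.2.1 m1.2.2.1 e3 e4 m1.2.2.2.2]
        · have hz : mulA (Bx 2) (Bx 3) = 0 := Subtype.ext (by
            rw [coe_mulA, coe_Bx2, coe_Bx3, E11_mul_E22]; rfl)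
          rw [hz, map_zero, mul_E22_zero _ e5 m2.2.2.2.1 e6]
          rfl
        · have hv : mulA (Bx 3) (Bx 3) = Bx 3 := Subtype.ext (by
            rw [coe_mulA, coe_Bx3, E22_mul_E22])
          rw [hv, mul_E22_self _ m3.1 m3.2.1 m3.2.2.1 e7 e8 m3.2.2.2.2]
    intro a b
    have h2 : F a b = 0 := by rw [hF]; rfl
    have h3 : ((T (mulA a b) : ↥Aex) : Matrix (Fin 3) (Fin 3) ℂ) -
        ((T a : ↥Aex) : Matrix (Fin 3) (Fin 3) ℂ) * (b : Matrix (Fin 3) (Fin 3) ℂ) = 0 := h2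
    exact sub_eq_zero.mp h3
  intro a b h
  have harg : (⟨(a : Matrix (Fin 3) (Fin 3) ℂ) * (b : Matrix (Fin 3) (Fin 3) ℂ), h⟩ : ↥Aex) =
      mulA a b := Subtype.ext rfl
  rw [harg]
  exact key a b

noncomputable instance : AddCommGroup ↥rightModEnd :=
  @Submodule.addCommGroup ℂ (↥Aex →ₗ[ℂ] ↥Aex) _ _ _ rightModEnd

noncomputable instance : Module ℂ ↥rightModEnd :=
  @Submodule.module ℂ (↥Aex →ₗ[ℂ] ↥Aex) _ _ _ rightModEnd

lemma mem_rightModEnd_iff (T : ↥Aex →ₗ[ℂ] ↥Aex) :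
    T ∈ rightModEnd ↔ piMap (LinearMap.toMatrix Bx Bx T) = 0 := by
  constructor
  · intro hT
    obtain ⟨e1, e2, e3, e4, e5, e6, e7, e8⟩ := entries_of_mem T hT
    funext k
    fin_cases k
    · show LinearMap.toMatrix Bx Bx T 1 0 = 0; rw [toMatrix_entry]; exact e1
    · show LinearMap.toMatrix Bx Bx T 3 0 = 0; rw [toMatrix_entry]; exact e2
    · show LinearMap.toMatrix Bx Bx T 0 1 = 0; rw [toMatrix_entry]; exact e3
    · show LinearMap.toMatrix Bx Bx T 2 1 = 0; rw [toMatrix_entry]; exact e4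
    · show LinearMap.toMatrix Bx Bx T 1 2 = 0; rw [toMatrix_entry]; exact e5
    · show LinearMap.toMatrix Bx Bx T 3 2 = 0; rw [toMatrix_entry]; exact e6
    · show LinearMap.toMatrix Bx Bx T 0 3 = 0; rw [toMatrix_entry]; exact e7
    · show LinearMap.toMatrix Bx Bx T 2 3 = 0; rw [toMatrix_entry]; exact e8
  · intro hk
    have g : ∀ (k : Fin 8), piMap (LinearMap.toMatrix Bx Bx T) k = 0 := fun k => by
      rw [hk]; rfl
    refine mem_of_entries T ?_ ?_ ?_ ?_ ?_ ?_ ?_ ?_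
    · have := g 0; rwa [show piMap (LinearMap.toMatrix Bx Bx T) 0 =
        LinearMap.toMatrix Bx Bx T 1 0 from rfl, toMatrix_entry] at this
    · have := g 1; rwa [show piMap (LinearMap.toMatrix Bx Bx T) 1 =
        LinearMap.toMatrix Bx Bx T 3 0 from rfl, toMatrix_entry] at this
    · have := g 2; rwa [show piMap (LinearMap.toMatrix Bx Bx T) 2 =
        LinearMap.toMatrix Bx Bx T 0 1 from rfl, toMatrix_entry] at this
    · have := g 3; rwa [show piMap (LinearMap.toMatrix Bx Bx T) 3 =
        LinearMap.toMatrix Bx Bx T 2 1 from rfl, toMatrix_entry] at this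
    · have := g 4; rwa [show piMap (LinearMap.toMatrix Bx Bx T) 4 =
        LinearMap.toMatrix Bx Bx T 1 2 from rfl, toMatrix_entry] at this
    · have := g 5; rwa [show piMap (LinearMap.toMatrix Bx Bx T) 5 =
        LinearMap.toMatrix Bx Bx T 3 2 from rfl, toMatrix_entry] at this
    · have := g 6; rwa [show piMap (LinearMap.toMatrix Bx Bx T) 6 =
        LinearMap.toMatrix Bx Bx T 0 3 from rfl, toMatrix_entry] at this
    · have := g 7; rwa [show piMap (LinearMap.toMatrix Bx Bx T) 7 =
        LinearMap.toMatrix Bx Bx T 2 3 from rfl, toMatrix_entry] at this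

theorem stmt15 : Module.finrank ℂ ↥rightModEnd = 8 := by
  have hmap : Submodule.map (LinearMap.toMatrix Bx Bx :
      (↥Aex →ₗ[ℂ] ↥Aex) ≃ₗ[ℂ] Matrix (Fin 4) (Fin 4) ℂ).toLinearMap rightModEnd
      = LinearMap.ker piMap := by
    ext M
    constructor
    · rintro ⟨T, hT, rfl⟩
      exact LinearMap.mem_ker.mpr ((mem_rightModEnd_iff T).mp hT)
    · intro hM
      refine ⟨(LinearMap.toMatrix Bx Bx).symm M, (mem_rightModEnd_iff _).mpr ?_, by simp⟩
      rw [LinearEquiv.apply_symm_apply]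
      exact LinearMap.mem_ker.mp hM
  have heq := ((LinearMap.toMatrix Bx Bx :
      (↥Aex →ₗ[ℂ] ↥Aex) ≃ₗ[ℂ] Matrix (Fin 4) (Fin 4) ℂ)).submoduleMap rightModEnd
  rw [hmap] at heq
  rw [heq.finrank_eq]
  exact finrank_ker_piMap
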